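/- arXiv:2402.09627 — 2 statements merged into one kernel-verified Lean document; each statement's English description precedes it below -/
import Mathlib

section
/- For a symmetric endomorphism A of an n-dimensional inner product space, tr(P_{r-1} A^2) = σ_1 σ_r − (r+1) σ_{r+1}, where σ_p is the p-th elementary symmetric polynomial of the eigenvalues of A (with σ_p = 0 for p > n). -/
open Matrix Finset

/-- The `p`-th elementary symmetric polynomial of `k 1, ..., k n`. -/
noncomputable def esymmF (n : ℕ) (k : Fin n → ℝ) (p : ℕ) : ℝ :=
  ∑ s ∈ (Finset.univ : Finset (Fin n)).powersetCard p, ∏ i ∈ s, k i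

/-- The `r`-th Newton transformation `P_r = Σ_{j=0}^r (-1)^j σ_{r-j} A^j`. -/
noncomputable def newtonT (n : ℕ) (A : Matrix (Fin n) (Fin n) ℝ) (k : Fin n → ℝ) (r : ℕ) :
    Matrix (Fin n) (Fin n) ℝ :=
  ∑ j ∈ Finset.range (r + 1), ((-1 : ℝ) ^ j * esymmF n k (r - j)) • A ^ j

lemma aeval_esymm' (n : ℕ) (k : Fin n → ℝ) (p : ℕ) :
    MvPolynomial.aeval k (MvPolynomial.esymm (Fin n) ℝ p) = esymmF n k p := by
  simp [MvPolynomial.esymm, esymmF]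

/-- Newton's identity over ℝ. -/
lemma newton_real (n : ℕ) (k : Fin n → ℝ) (m : ℕ) :
    (m : ℝ) * esymmF n k m = (-1) ^ (m + 1) *
      ∑ a ∈ Finset.HasAntidiagonal.antidiagonal m with a.1 < m,
        (-1) ^ a.1 * esymmF n k a.1 * ∑ i, k i ^ a.2 := by
  have h := congrArg (MvPolynomial.aeval k) (MvPolynomial.mul_esymm_eq_sum (Fin n) ℝ m)
  have he' : ∀ p, MvPolynomial.eval k (MvPolynomial.esymm (Fin n) ℝ p) = esymmF n k p :=
    fun p => by rw [← MvPolynomial.coe_aeval_eq_eval]; exact aeval_esymm' n k p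
  simpa [MvPolynomial.psum, aeval_esymm', he'] using h

lemma trace_pow_eq (n : ℕ) (A : Matrix (Fin n) (Fin n) ℝ) (hA : A.IsHermitian) (m : ℕ) :
    (A ^ m).trace = ∑ i, hA.eigenvalues i ^ m := by
  set u : Matrix (Fin n) (Fin n) ℝ := (hA.eigenvectorUnitary : Matrix (Fin n) (Fin n) ℝ) with hu
  have h1 : star u * u = 1 := (Unitary.mem_iff.mp hA.eigenvectorUnitary.2).1
  have h2 : u * star u = 1 := (Unitary.mem_iff.mp hA.eigenvectorUnitary.2).2
  set D : Matrix (Fin n) (Fin n) ℝ := diagonal (RCLike.ofReal ∘ hA.eigenvalues) with hD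
  have key : ∀ m : ℕ, A ^ m = u * D ^ m * star u := by
    intro m
    induction m with
    | zero => simp only [pow_zero, mul_one, h2]
    | succ m ih =>
      rw [pow_succ, ih]
      rw [hA.spectral_theorem, Unitary.conjStarAlgAut_apply]
      rw [← hu, ← hD, pow_succ]
      calc u * D ^ m * star u * (u * D * star u)
          = u * D ^ m * (star u * u) * D * star u := by
            simp only [mul_assoc]
        _ = u * (D ^ m * D) * star u := by rw [h1]; simp only [mul_assoc, one_mul]
  rw [key, trace_mul_comm, ← mul_assoc, h1, one_mul, hD, diagonal_pow, trace_diagonal]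
  simp

lemma neg_one_pow_sub_real (a b : ℕ) (h : b ≤ a) :
    ((-1 : ℝ)) ^ (a - b) = (-1) ^ a * (-1) ^ b := by
  obtain ⟨c, rfl⟩ := Nat.exists_eq_add_of_le h
  have h2 : ((-1 : ℝ)) ^ b * (-1) ^ b = 1 := by
    rw [← pow_add]; exact Even.neg_one_pow ⟨b, rfl⟩
  rw [Nat.add_sub_cancel_left, pow_add, mul_comm ((-1 : ℝ) ^ b), mul_assoc, h2, mul_one]

/-- tr(P_{r-1} A²) = σ_1 σ_r − (r+1) σ_{r+1}. -/
theorem trace_newton_mul_sq (n r : ℕ) (hr1 : 1 ≤ r) (hrn : r ≤ n)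
    (A : Matrix (Fin n) (Fin n) ℝ) (hA : A.IsHermitian) :
    (newtonT n A hA.eigenvalues (r - 1) * A ^ 2).trace =
      esymmF n hA.eigenvalues 1 * esymmF n hA.eigenvalues r -
        ((r : ℝ) + 1) * esymmF n hA.eigenvalues (r + 1) := by
  set k := hA.eigenvalues with hk
  set e : ℕ → ℝ := esymmF n k with he
  set P : ℕ → ℝ := fun m => ∑ i, k i ^ m with hP
  have hrr : r - 1 + 1 = r := Nat.succ_pred_eq_of_pos hr1
  -- Step 1 : trace as a sum of power sums
  have hLHS : (newtonT n A k (r - 1) * A ^ 2).trace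
      = ∑ j ∈ Finset.range r, (-1 : ℝ) ^ j * e (r - 1 - j) * P (j + 2) := by
    rw [newtonT, hrr, Finset.sum_mul, trace_sum]
    refine Finset.sum_congr rfl fun j hj => ?_
    rw [Matrix.smul_mul, trace_smul, ← pow_add, trace_pow_eq n A hA (j + 2)]
    simp [hP, mul_assoc]
    rfl
  -- Step 2 : Newton's identity at degree r+1, in range form
  have hNewton := newton_real n k (r + 1)
  have hconv : (∑ a ∈ Finset.HasAntidiagonal.antidiagonal (r + 1) with a.1 < r + 1,
        (-1 : ℝ) ^ a.1 * esymmF n k a.1 * ∑ i, k i ^ a.2)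
      = ∑ i ∈ Finset.range (r + 1), (-1 : ℝ) ^ i * e i * P (r + 1 - i) := by
    rw [Finset.sum_filter, Finset.Nat.sum_antidiagonal_eq_sum_range_succ_mk,
      Finset.sum_range_succ, if_neg (lt_irrefl (r + 1)), add_zero]
    refine Finset.sum_congr rfl fun i hi => ?_
    rw [if_pos (Finset.mem_range.mp hi)]
  rw [hconv] at hNewton
  -- split off the last term
  rw [Finset.sum_range_succ] at hNewton
  have hP1 : P 1 = e 1 := by
    rw [he, ← aeval_esymm' n k 1, MvPolynomial.esymm_one]
    simp [hP]
  -- Step 3 : reindex the trace sum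
  have hreflect : (∑ j ∈ Finset.range r, (-1 : ℝ) ^ j * e (r - 1 - j) * P (j + 2))
      = ∑ i ∈ Finset.range r, (-1 : ℝ) ^ (r - 1 - i) * e i * P (r + 1 - i) := by
    rw [← Finset.sum_range_reflect (fun i => (-1 : ℝ) ^ (r - 1 - i) * e i * P (r + 1 - i)) r]
    refine Finset.sum_congr rfl fun j hj => ?_
    have hj' : j < r := Finset.mem_range.mp hj
    have h1 : r - 1 - (r - 1 - j) = j := by omega
    have h2 : r + 1 - (r - 1 - j) = j + 2 := by omega
    rw [h1, h2]
  have hsplit : ∀ i ∈ Finset.range r,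
      (-1 : ℝ) ^ (r - 1 - i) * e i * P (r + 1 - i)
        = (-1 : ℝ) ^ (r - 1) * ((-1 : ℝ) ^ i * e i * P (r + 1 - i)) := by
    intro i hi
    have hir := Finset.mem_range.mp hi
    have hi' : i ≤ r - 1 := by omega
    rw [neg_one_pow_sub_real (r - 1) i hi']
    ring
  rw [Finset.sum_congr rfl hsplit, ← Finset.mul_sum] at hreflect
  -- Step 4 : combine
  set S := ∑ i ∈ Finset.range r, (-1 : ℝ) ^ i * e i * P (r + 1 - i) with hS
  have hsub : r + 1 - r = 1 := by omega
  rw [hsub, hP1] at hNewton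
  obtain ⟨m, hm⟩ : ∃ m, r = m + 1 := ⟨r - 1, by omega⟩
  have hm1 : r - 1 = m := by omega
  have hε : (-1 : ℝ) ^ (r + 1 + 1) = -(-1 : ℝ) ^ m := by
    subst hm; ring
  have hε2 : (-1 : ℝ) ^ m * (-1 : ℝ) ^ m = 1 := by
    rw [← pow_add]; exact Even.neg_one_pow ⟨m, rfl⟩
  have hεr : (-1 : ℝ) ^ r = -(-1 : ℝ) ^ m := by
    subst hm; ring
  rw [hε, hεr, ← he] at hNewton
  rw [hLHS, hreflect, hm1]
  push_cast at hNewton ⊢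
  linear_combination hNewton + e r * e 1 * hε2
end

section
/- Let A be a symmetric endomorphism with Newton transformation P_{r-1} positive semidefinite and satisfying tr(P_{r-1} A²) ≤ r and tr(P_{r-1}) ≤ M. Then r² σ_r² ≤ r M; in particular σ_r² ≤ M/r is bounded. -/
open Matrix Finset

lemma esymmF_eq_eval (n : ℕ) (k : Fin n → ℝ) (p : ℕ) :
    esymmF n k p = MvPolynomial.eval k (MvPolynomial.esymm (Fin n) ℝ p) := by
  simp [esymmF, MvPolynomial.esymm]

/-- Evaluated Newton's identity, in the form needed here. -/
lemma newton_scalar (n r : ℕ) (hr1 : 1 ≤ r) (k : Fin n → ℝ) :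
    ∑ j ∈ Finset.range r, (-1 : ℝ) ^ j * esymmF n k (r - 1 - j) * (∑ i, k i ^ (j + 1)) =
      (r : ℝ) * esymmF n k r := by
  have hN := congrArg (MvPolynomial.eval k) (MvPolynomial.mul_esymm_eq_sum (Fin n) ℝ r)
  simp only [_root_.map_mul, map_sum, map_pow, map_neg, _root_.map_one, map_natCast,
    MvPolynomial.psum, MvPolynomial.eval_X] at hN
  simp only [← esymmF_eq_eval] at hN
  -- rewrite the filtered antidiagonal sum as a sum over `range r`
  have h1 : ∑ a ∈ Finset.HasAntidiagonal.antidiagonal r with a.1 < r,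
        (-1 : ℝ) ^ a.1 * esymmF n k a.1 * (∑ i, k i ^ a.2)
      = ∑ a ∈ Finset.HasAntidiagonal.antidiagonal r,
        (if a.1 < r then
          (-1 : ℝ) ^ a.1 * esymmF n k a.1 * (∑ i, k i ^ a.2) else 0) :=
    Finset.sum_filter _ _
  have h2 : ∑ a ∈ Finset.HasAntidiagonal.antidiagonal r,
        (if a.1 < r then
          (-1 : ℝ) ^ a.1 * esymmF n k a.1 * (∑ i, k i ^ a.2) else 0)
      = ∑ m ∈ Finset.range r, (-1 : ℝ) ^ m * esymmF n k m * (∑ i, k i ^ (r - m)) := by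
    rw [Finset.Nat.sum_antidiagonal_eq_sum_range_succ_mk, Finset.sum_range_succ]
    simp only [lt_irrefl, if_false, add_zero]
    refine Finset.sum_congr rfl fun m hm => ?_
    rw [if_pos (Finset.mem_range.mp hm)]
  rw [h1, h2] at hN
  -- reflect the sum
  have h3 : ∑ m ∈ Finset.range r, (-1 : ℝ) ^ m * esymmF n k m * (∑ i, k i ^ (r - m))
      = (-1 : ℝ) ^ (r - 1) *
        ∑ j ∈ Finset.range r, (-1 : ℝ) ^ j * esymmF n k (r - 1 - j) * (∑ i, k i ^ (j + 1)) := by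
    rw [← Finset.sum_range_reflect (fun m => (-1 : ℝ) ^ m * esymmF n k m * (∑ i, k i ^ (r - m))) r,
      Finset.mul_sum]
    refine Finset.sum_congr rfl fun j hj => ?_
    have hj' : j ≤ r - 1 := Nat.le_sub_one_of_lt (Finset.mem_range.mp hj)
    have hsub : r - (r - 1 - j) = j + 1 := by omega
    have hsign : (-1 : ℝ) ^ (r - 1 - j) = (-1 : ℝ) ^ (r - 1) * (-1 : ℝ) ^ j := by
      have h := pow_add (-1 : ℝ) (r - 1 - j) j
      rw [Nat.sub_add_cancel hj'] at h
      have hsq : ((-1 : ℝ) ^ j) * ((-1 : ℝ) ^ j) = 1 := by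
        rw [← pow_add]; simp [pow_add, pow_mul, ← two_mul]
      calc (-1 : ℝ) ^ (r - 1 - j) = (-1 : ℝ) ^ (r - 1 - j) * (((-1 : ℝ) ^ j) * ((-1 : ℝ) ^ j)) := by
            rw [hsq, mul_one]
        _ = ((-1 : ℝ) ^ (r - 1 - j) * (-1 : ℝ) ^ j) * (-1 : ℝ) ^ j := by ring
        _ = (-1 : ℝ) ^ (r - 1) * (-1 : ℝ) ^ j := by rw [← h]
    rw [hsub, hsign]; ring
  rw [h3, ← mul_assoc, ← pow_add] at hN
  have hexp : r + 1 + (r - 1) = 2 * r := by omega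
  rw [hexp, pow_mul] at hN
  simp only [neg_one_sq, one_pow, one_mul] at hN
  exact hN.symm

/-- If P_{r-1} is positive semidefinite with tr(P_{r-1}A²) ≤ r and tr(P_{r-1}) ≤ M,
then r² σ_r² ≤ r M; in particular σ_r² ≤ M/r. -/
theorem sigma_bound (n r : ℕ) (hr1 : 1 ≤ r) (hrn : r ≤ n)
    (A : Matrix (Fin n) (Fin n) ℝ) (hA : A.IsHermitian) (M : ℝ)
    (hP : (newtonT n A hA.eigenvalues (r - 1)).PosSemidef)
    (htr2 : (newtonT n A hA.eigenvalues (r - 1) * A ^ 2).trace ≤ (r : ℝ))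
    (htr : (newtonT n A hA.eigenvalues (r - 1)).trace ≤ M) :
    (r : ℝ) ^ 2 * esymmF n hA.eigenvalues r ^ 2 ≤ (r : ℝ) * M ∧
      esymmF n hA.eigenvalues r ^ 2 ≤ M / r := by
  classical
  set lam := hA.eigenvalues with hlam
  set U : Matrix (Fin n) (Fin n) ℝ := (hA.eigenvectorUnitary : Matrix (Fin n) (Fin n) ℝ) with hU
  have hUmem := hA.eigenvectorUnitary.2
  have hUU : U * star U = 1 := (Matrix.mem_unitaryGroup_iff).mp hUmem
  have hUU' : star U * U = 1 := (Matrix.mem_unitaryGroup_iff').mp hUmem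
  have hspec : A = U * Matrix.diagonal lam * star U := by
    have := hA.spectral_theorem
    simpa [hU, hlam, Function.comp] using this
  have hsUU : ∀ X : Matrix (Fin n) (Fin n) ℝ, star U * (U * X) = X := fun X => by
    rw [← Matrix.mul_assoc, hUU', Matrix.one_mul]
  have hUsU : ∀ X : Matrix (Fin n) (Fin n) ℝ, U * (star U * X) = X := fun X => by
    rw [← Matrix.mul_assoc, hUU, Matrix.one_mul]
  -- conjugated powers
  have hAd : star U * A * U = Matrix.diagonal lam := by
    rw [hspec]
    simp only [Matrix.mul_assoc, hsUU, hUsU, hUU, hUU', Matrix.mul_one, Matrix.one_mul]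
  have hpow : ∀ j : ℕ, star U * A ^ j * U = (Matrix.diagonal lam) ^ j := by
    intro j
    induction j with
    | zero => simp [hUU']
    | succ j ih =>
        have : star U * A ^ (j + 1) * U = (star U * A ^ j * U) * (star U * A * U) := by
          rw [pow_succ]
          simp only [Matrix.mul_assoc, hsUU, hUsU]
        rw [this, ih, hAd, pow_succ]
  set f : Fin n → ℝ := fun i => ∑ j ∈ Finset.range r, (-1 : ℝ) ^ j * esymmF n lam (r - 1 - j) *
    lam i ^ j with hf
  have hr0 : r - 1 + 1 = r := Nat.succ_pred_eq_of_pos hr1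
  -- conjugated Newton transformation is diagonal f
  have hdiagP : star U * newtonT n A lam (r - 1) * U = Matrix.diagonal f := by
    rw [newtonT, hr0, Finset.mul_sum, Finset.sum_mul]
    have h : ∀ j ∈ Finset.range r,
        star U * (((-1 : ℝ) ^ j * esymmF n lam (r - 1 - j)) • A ^ j) * U
          = ((-1 : ℝ) ^ j * esymmF n lam (r - 1 - j)) • (Matrix.diagonal lam) ^ j := by
      intro j _
      rw [Matrix.mul_smul, Matrix.smul_mul, hpow j]
    rw [Finset.sum_congr rfl h]
    ext i i'
    simp only [Matrix.sum_apply, Matrix.smul_apply, Matrix.diagonal_pow,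
      Matrix.diagonal_apply, smul_eq_mul]
    by_cases h : i = i'
    · subst h
      simp [hf, mul_comm]
    · simp [h]
  have hPdiag : newtonT n A lam (r - 1) = U * Matrix.diagonal f * star U := by
    have h := congrArg (fun X => U * X * star U) hdiagP
    rw [← h]
    simp only [Matrix.mul_assoc, hUsU, hUU, Matrix.mul_one]
  -- eigenvalues of P are nonneg
  have hfnonneg : ∀ i, 0 ≤ f i := by
    have h1 : (star U * newtonT n A lam (r - 1) * (star U)ᴴ).PosSemidef :=
      hP.mul_mul_conjTranspose_same (star U)
    have h2 : (star U)ᴴ = U := by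
      simp [Matrix.star_eq_conjTranspose]
    rw [h2, hdiagP] at h1
    intro i
    simpa using (Matrix.posSemidef_diagonal_iff.mp h1 i)
  -- trace computations
  have htraceP : (newtonT n A lam (r - 1)).trace = ∑ i, f i := by
    rw [hPdiag, Matrix.trace_mul_cycle, hUU', Matrix.one_mul, Matrix.trace_diagonal]
  have htracePA2 : (newtonT n A lam (r - 1) * A ^ 2).trace = ∑ i, f i * lam i ^ 2 := by
    have hA2 : A ^ 2 = U * (Matrix.diagonal lam) ^ 2 * star U := by
      have h := congrArg (fun X => U * X * star U) (hpow 2)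
      rw [← h]
      simp only [Matrix.mul_assoc, hUsU, hUU, Matrix.mul_one]
    rw [hPdiag, hA2]
    have h : U * Matrix.diagonal f * star U * (U * (Matrix.diagonal lam) ^ 2 * star U)
        = U * (Matrix.diagonal f * (Matrix.diagonal lam) ^ 2) * star U := by
      simp only [Matrix.mul_assoc, hsUU, hUsU]
    rw [h, Matrix.trace_mul_cycle, hUU', Matrix.one_mul,
      Matrix.diagonal_pow, Matrix.diagonal_mul_diagonal, Matrix.trace_diagonal]
    simp [Pi.pow_apply]
  have htracePA : (newtonT n A lam (r - 1) * A).trace = ∑ i, f i * lam i := by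
    rw [hPdiag]
    nth_rewrite 1 [hspec]
    have h : U * Matrix.diagonal f * star U * (U * Matrix.diagonal lam * star U)
        = U * (Matrix.diagonal f * Matrix.diagonal lam) * star U := by
      simp only [Matrix.mul_assoc, hsUU, hUsU]
    rw [h, Matrix.trace_mul_cycle, hUU', Matrix.one_mul,
      Matrix.diagonal_mul_diagonal, Matrix.trace_diagonal]
  -- Newton's identity: ∑ f i * lam i = r * σ_r
  have hnewton : ∑ i, f i * lam i = (r : ℝ) * esymmF n lam r := by
    rw [← newton_scalar n r hr1 lam]
    have hterm : ∀ i : Fin n, f i * lam i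
        = ∑ j ∈ Finset.range r, (-1 : ℝ) ^ j * esymmF n lam (r - 1 - j) * lam i ^ (j + 1) := by
      intro i
      rw [hf, Finset.sum_mul]
      exact Finset.sum_congr rfl fun j _ => by rw [pow_succ]; ring
    rw [Finset.sum_congr rfl fun i _ => hterm i, Finset.sum_comm]
    exact Finset.sum_congr rfl fun j _ => by rw [Finset.mul_sum]
  -- put everything together
  have hS1 : (0 : ℝ) ≤ ∑ i, f i := Finset.sum_nonneg fun i _ => hfnonneg i
  have hS2 : (0 : ℝ) ≤ ∑ i, f i * lam i ^ 2 :=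
    Finset.sum_nonneg fun i _ => mul_nonneg (hfnonneg i) (sq_nonneg _)
  have htrM : ∑ i, f i ≤ M := by rw [← htraceP]; exact htr
  have htrr : ∑ i, f i * lam i ^ 2 ≤ (r : ℝ) := by rw [← htracePA2]; exact htr2
  have hCS : (∑ i, f i * lam i) ^ 2 ≤ (∑ i, f i) * ∑ i, f i * lam i ^ 2 := by
    refine Finset.sum_sq_le_sum_mul_sum_of_sq_eq_mul Finset.univ
      (fun i _ => hfnonneg i) (fun i _ => mul_nonneg (hfnonneg i) (sq_nonneg _))
      (fun i _ => by ring)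
  have hMr : (∑ i, f i) * (∑ i, f i * lam i ^ 2) ≤ M * r :=
    mul_le_mul htrM htrr hS2 (hS1.trans htrM)
  have hkey : ((r : ℝ) * esymmF n lam r) ^ 2 ≤ M * r := by
    rw [← hnewton]; exact hCS.trans hMr
  have hrpos : (0 : ℝ) < r := by exact_mod_cast hr1
  constructor
  · nlinarith [hkey]
  · rw [le_div_iff₀ hrpos]
    nlinarith [hkey]
end
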